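/- Let A, B₁, B₂ be finite nonempty sets in a commutative group, with |A| = n, |A + B₁| = K₁n and |A + B₂| = K₂n. Then there is a nonempty set A' ⊆ A such that |A' + B₁ + B₂| ≤ K₁K₂|A'|. -/

import Mathlib

open Pointwise Finset Fintype

namespace PluenneckeAux

variable {G : Type*} [AddCommGroup G] [DecidableEq G]

/-- Sum of two product finsets. -/
lemma prod_add_prod' {G₁ G₂ : Type*} [AddCommGroup G₁] [DecidableEq G₁]
    [AddCommGroup G₂] [DecidableEq G₂] (s u : Finset G₁) (t v : Finset G₂) :
    (s ×ˢ t) + (u ×ˢ v) = (s + u) ×ˢ (t + v) := by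
  ext ⟨a, b⟩
  simp only [Finset.mem_add, Finset.mem_product, Prod.exists, Prod.mk_add_mk, Prod.mk.injEq]
  constructor
  · rintro ⟨x1, x2, ⟨hx1, hx2⟩, y1, y2, ⟨hy1, hy2⟩, h1, h2⟩
    exact ⟨⟨x1, hx1, y1, hy1, h1⟩, ⟨x2, hx2, y2, hy2, h2⟩⟩
  · rintro ⟨⟨x1, hx1, y1, hy1, h1⟩, ⟨x2, hx2, y2, hy2, h2⟩⟩
    exact ⟨x1, x2, ⟨hx1, hx2⟩, y1, y2, ⟨hy1, hy2⟩, h1, h2⟩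

/-- Petridis: the minimising subset works against every `C`, with constant `|A+B|/|A|`. -/
lemma petridis_family (A B : Finset G) (hA : A.Nonempty) :
    ∃ X, X ⊆ A ∧ X.Nonempty ∧ ∀ C : Finset G,
      (#(X + B + C) : ℚ≥0) * #A ≤ (#(A + B) : ℚ≥0) * #(X + C) := by
  have hA' : A ∈ A.powerset.erase ∅ := mem_erase_of_ne_of_mem hA.ne_empty (mem_powerset_self _)
  obtain ⟨X, hX, hmin⟩ := exists_min_image (A.powerset.erase ∅)
    (fun Z => (#(Z + B) : ℚ≥0) / #Z) ⟨A, hA'⟩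
  rw [mem_erase, mem_powerset, ← nonempty_iff_ne_empty] at hX
  obtain ⟨hXne, hXA⟩ := hX
  have hX0 : (0 : ℚ≥0) < #X := by exact_mod_cast hXne.card_pos
  have hA0 : (0 : ℚ≥0) < #A := by exact_mod_cast hA.card_pos
  refine ⟨X, hXA, hXne, fun C => ?_⟩
  have haux : ∀ X' ⊆ X, #(X + B) * #X' ≤ #(X' + B) * #X := by
    intro X' hX'
    obtain rfl | hX'ne := X'.eq_empty_or_nonempty
    · simp
    have h := hmin X' (mem_erase_of_ne_of_mem hX'ne.ne_empty (mem_powerset.2 (hX'.trans hXA)))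
    have hX'0 : (0 : ℚ≥0) < #X' := by exact_mod_cast hX'ne.card_pos
    exact_mod_cast (div_le_div_iff₀ hX0 hX'0).1 h
  have key : (#(X + B + C) : ℚ≥0) * #X ≤ (#(X + B) : ℚ≥0) * #(X + C) := by
    have := Finset.pluennecke_petridis_inequality_add C haux
    rw [add_comm C X, add_right_comm X C B] at this
    exact_mod_cast this
  have hcmp : (#(X + B) : ℚ≥0) * #A ≤ (#(A + B) : ℚ≥0) * #X := by
    exact_mod_cast (div_le_div_iff₀ hX0 hA0).1 (hmin A hA')
  have h1 : ((#(X + B + C) : ℚ≥0) * #A) * #X ≤ ((#(A + B) : ℚ≥0) * #(X + C)) * #X := by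
    calc ((#(X + B + C) : ℚ≥0) * #A) * #X = ((#(X + B + C) : ℚ≥0) * #X) * #A := by ring
      _ ≤ ((#(X + B) : ℚ≥0) * #(X + C)) * #A := by exact mul_le_mul_left key _
      _ = ((#(X + B) : ℚ≥0) * #A) * #(X + C) := by ring
      _ ≤ ((#(A + B) : ℚ≥0) * #X) * #(X + C) := by exact mul_le_mul_left hcmp _
      _ = ((#(A + B) : ℚ≥0) * #(X + C)) * #X := by ring
  exact le_of_mul_le_mul_right h1 hX0

lemma sum_eq_sum_card_filter_le {α : Type*} (s : Finset α) (v : α → ℕ) (T : ℕ)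
    (hv : ∀ x ∈ s, v x ≤ T) :
    ∑ x ∈ s, v x = ∑ t ∈ Finset.Icc 1 T, #{x ∈ s | t ≤ v x} := by
  have h : ∀ x ∈ s, v x = #{t ∈ Finset.Icc 1 T | t ≤ v x} := by
    intro x hx
    have hb := hv x hx
    have : {t ∈ Finset.Icc 1 T | t ≤ v x} = Finset.Icc 1 (v x) := by
      ext t
      simp only [Finset.mem_filter, Finset.mem_Icc]
      omega
    rw [this, Nat.card_Icc]
    omega
  rw [Finset.sum_congr rfl h]
  simp_rw [Finset.card_filter]
  exact Finset.sum_comm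

lemma fiber_product_lemma {G₁ G₂ : Type*} [AddCommGroup G₁] [DecidableEq G₁]
    [AddCommGroup G₂] [DecidableEq G₂]
    (A₁ S₁ : Finset G₁) (A₂ S₂ : Finset G₂) (d₁ d₂ : ℚ≥0)
    (h₁ : ∀ Z ⊆ A₁, d₁ * #Z ≤ (#(Z + S₁) : ℚ≥0))
    (h₂ : ∀ Z ⊆ A₂, d₂ * #Z ≤ (#(Z + S₂) : ℚ≥0))
    (X : Finset (G₁ × G₂)) (hXA : X ⊆ A₁ ×ˢ A₂) :
    d₁ * d₂ * #X ≤ (#(X + S₁ ×ˢ S₂) : ℚ≥0) := by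
  classical
  obtain rfl | hXne := X.eq_empty_or_nonempty
  · simp
  have hπA : X.image Prod.fst ⊆ A₁ := by
    intro u hu
    obtain ⟨p, hp, rfl⟩ := mem_image.1 hu
    exact (mem_product.1 (hXA hp)).1
  have hπne : (X.image Prod.fst).Nonempty := hXne.image _
  obtain rfl | hS₁ := S₁.eq_empty_or_nonempty
  · have h := h₁ _ hπA
    rw [Finset.add_empty, Finset.card_empty] at h
    have hd₁ : d₁ = 0 := by
      by_contra hd
      have : (0 : ℚ≥0) < d₁ * #(X.image Prod.fst) := by
        have h0 : (0:ℚ≥0) < #(X.image Prod.fst) := by exact_mod_cast hπne.card_pos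
        positivity
      simp only [Nat.cast_zero] at h
      exact absurd (lt_of_lt_of_le this h) (lt_irrefl 0)
    simp [hd₁]
  obtain rfl | hS₂ := S₂.eq_empty_or_nonempty
  · have hfib : (X.image Prod.snd) ⊆ A₂ := by
      intro u hu
      obtain ⟨p, hp, rfl⟩ := mem_image.1 hu
      exact (mem_product.1 (hXA hp)).2
    have h := h₂ _ hfib
    rw [Finset.add_empty, Finset.card_empty] at h
    have hd₂ : d₂ = 0 := by
      by_contra hd
      have h0 : (0:ℚ≥0) < #(X.image Prod.snd) := by exact_mod_cast (hXne.image _).card_pos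
      have : (0 : ℚ≥0) < d₂ * #(X.image Prod.snd) := by positivity
      simp only [Nat.cast_zero] at h
      exact absurd (lt_of_lt_of_le this h) (lt_irrefl 0)
    simp [hd₂]
  -- main case
  set Y := X + S₁ ×ˢ S₂ with hY
  set fib : Finset (G₁ × G₂) → G₁ → Finset G₂ :=
    fun Z u => ({p ∈ Z | p.1 = u}).image Prod.snd with hfibdef
  have hmemfib : ∀ (Z : Finset (G₁ × G₂)) (u : G₁) (v : G₂), v ∈ fib Z u ↔ (u, v) ∈ Z := by
    intro Z u v
    rw [hfibdef]
    simp only [mem_image, mem_filter]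
    constructor
    · rintro ⟨⟨a, b⟩, ⟨hp, rfl⟩, rfl⟩
      exact hp
    · intro h
      exact ⟨(u, v), ⟨h, rfl⟩, rfl⟩
  have Fcard : ∀ Z : Finset (G₁ × G₂), #Z = ∑ u ∈ Z.image Prod.fst, #(fib Z u) := by
    intro Z
    rw [Finset.card_eq_sum_card_fiberwise (f := Prod.fst) (t := Z.image Prod.fst)
      (fun x hx => mem_image_of_mem _ hx)]
    refine Finset.sum_congr rfl fun u _ => ?_
    rw [hfibdef]
    exact (Finset.card_image_of_injOn (fun p hp q hq h =>
      Prod.ext ((mem_filter.1 hp).2.trans ((mem_filter.1 hq).2).symm) h)).symm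
  -- key fiber inclusion
  have hkey : ∀ (u : G₁), ∀ s ∈ S₁, fib X u + S₂ ⊆ fib Y (u + s) := by
    intro u s hs v hv
    rw [Finset.mem_add] at hv
    obtain ⟨b, hb, c, hc, rfl⟩ := hv
    rw [hmemfib] at hb ⊢
    exact Finset.add_mem_add hb ((Finset.mem_product (p := (s, c))).2 ⟨hs, hc⟩)
  set f : G₁ → ℕ := fun u => #(fib X u + S₂) with hfdef
  set g : G₁ → ℕ := fun w => #(fib Y w) with hgdef
  have hfibA : ∀ u, fib X u ⊆ A₂ := by
    intro u v hv
    rw [hmemfib] at hv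
    exact (mem_product.1 (hXA hv)).2
  have hgle : ∀ w, g w ≤ #Y := by
    intro w
    rw [hgdef]
    calc #(fib Y w) ≤ #({p ∈ Y | p.1 = w}) := Finset.card_image_le
      _ ≤ #Y := Finset.card_filter_le _ _
  have hfg : ∀ u ∈ X.image Prod.fst, ∀ s ∈ S₁, f u ≤ g (u + s) :=
    fun u _ s hs => Finset.card_le_card (hkey u s hs)
  have hρ : ∀ u ∈ X.image Prod.fst, ∀ s ∈ S₁, u + s ∈ Y.image Prod.fst := by
    intro u hu s hs
    obtain ⟨p, hp, hp1⟩ := mem_image.1 hu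
    have hpX : (u, p.2) ∈ X := by
      have : p = (u, p.2) := Prod.ext hp1 rfl
      rwa [this] at hp
    obtain ⟨c, hc⟩ := hS₂
    have : ((u, p.2) + (s, c)) ∈ Y :=
      Finset.add_mem_add hpX ((Finset.mem_product (p := (s, c))).2 ⟨hs, hc⟩)
    exact mem_image_of_mem _ this
  obtain ⟨s₀, hs₀⟩ := hS₁
  have hfle : ∀ u ∈ X.image Prod.fst, f u ≤ #Y :=
    fun u hu => le_trans (hfg u hu s₀ hs₀) (hgle _)
  have e1 := sum_eq_sum_card_filter_le (X.image Prod.fst) f (#Y) hfle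
  have e2 := sum_eq_sum_card_filter_le (Y.image Prod.fst) g (#Y) (fun w _ => hgle w)
  have hUW : ∀ t : ℕ, ({u ∈ X.image Prod.fst | t ≤ f u}) + S₁ ⊆
      {w ∈ Y.image Prod.fst | t ≤ g w} := by
    intro t x hx
    rw [Finset.mem_add] at hx
    obtain ⟨u, hu, s, hs, rfl⟩ := hx
    obtain ⟨huπ, huf⟩ := mem_filter.1 hu
    exact mem_filter.2 ⟨hρ u huπ s hs, le_trans huf (hfg u huπ s hs)⟩
  have hstep : ∀ t : ℕ, d₁ * #({u ∈ X.image Prod.fst | t ≤ f u}) ≤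
      (#({w ∈ Y.image Prod.fst | t ≤ g w}) : ℚ≥0) := by
    intro t
    calc d₁ * #({u ∈ X.image Prod.fst | t ≤ f u})
        ≤ (#({u ∈ X.image Prod.fst | t ≤ f u} + S₁) : ℚ≥0) :=
          h₁ _ ((Finset.filter_subset _ _).trans hπA)
      _ ≤ _ := by exact_mod_cast Finset.card_le_card (hUW t)
  have c1 : d₂ * (#X : ℚ≥0) ≤ ∑ u ∈ X.image Prod.fst, (f u : ℚ≥0) := by
    rw [Fcard X]
    push_cast
    rw [Finset.mul_sum]
    exact Finset.sum_le_sum fun u _ => h₂ _ (hfibA u)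
  have c2 : d₁ * ∑ u ∈ X.image Prod.fst, (f u : ℚ≥0) ≤ (#Y : ℚ≥0) := by
    have e1' : (∑ u ∈ X.image Prod.fst, (f u : ℚ≥0)) =
        ∑ t ∈ Finset.Icc 1 (#Y), (#({u ∈ X.image Prod.fst | t ≤ f u}) : ℚ≥0) := by
      exact_mod_cast congrArg (Nat.cast : ℕ → ℚ≥0) e1
    rw [e1', Finset.mul_sum]
    calc ∑ t ∈ Finset.Icc 1 (#Y), d₁ * (#({u ∈ X.image Prod.fst | t ≤ f u}) : ℚ≥0)
        ≤ ∑ t ∈ Finset.Icc 1 (#Y), (#({w ∈ Y.image Prod.fst | t ≤ g w}) : ℚ≥0) :=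
          Finset.sum_le_sum fun t _ => hstep t
      _ = ((∑ w ∈ Y.image Prod.fst, g w : ℕ) : ℚ≥0) := by rw [e2]; push_cast; rfl
      _ = (#Y : ℚ≥0) := by rw [← Fcard Y]
  calc d₁ * d₂ * (#X : ℚ≥0) = d₁ * (d₂ * #X) := mul_assoc _ _ _
    _ ≤ d₁ * ∑ u ∈ X.image Prod.fst, (f u : ℚ≥0) := mul_le_mul_right c1 _
    _ ≤ (#Y : ℚ≥0) := c2

/-- The additive equivalence `(Fin (m+1) → G) ≃+ G × (Fin m → G)`. -/
def finSuccAddEquiv (m : ℕ) : (Fin (m + 1) → G) ≃+ G × (Fin m → G) where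
  toFun f := (f 0, Fin.tail f)
  invFun p := Fin.cons p.1 p.2
  left_inv f := Fin.cons_self_tail f
  right_inv p := by simp [Fin.tail_cons]
  map_add' f g := rfl

lemma image_finSuccAddEquiv_piFinset (m : ℕ) (T : Finset G) :
    (Fintype.piFinset fun _ : Fin (m + 1) => T).image (finSuccAddEquiv m) =
      T ×ˢ (Fintype.piFinset fun _ : Fin m => T) := by
  ext p
  constructor
  · intro hp
    obtain ⟨fn, hfn, rfl⟩ := Finset.mem_image.1 hp
    rw [Fintype.mem_piFinset] at hfn
    have h2 : Fin.tail fn ∈ Fintype.piFinset (fun _ : Fin m => T) := by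
      rw [Fintype.mem_piFinset]
      intro i
      exact hfn i.succ
    exact Finset.mem_product.2 ⟨hfn 0, h2⟩
  · intro hp
    obtain ⟨a, v⟩ := p
    obtain ⟨hp1, hp2⟩ := Finset.mem_product.1 hp
    have hmem : Fin.cons (α := fun _ : Fin (m + 1) => G) a v ∈ Fintype.piFinset (fun _ : Fin (m + 1) => T) := by
      rw [Fintype.mem_piFinset]
      intro i
      induction i using Fin.cases with
      | zero => simpa using hp1
      | succ j => simpa using Fintype.mem_piFinset.1 hp2 j
    have himg : (finSuccAddEquiv m) (Fin.cons (α := fun _ : Fin (m + 1) => G) a v) = (a, v) := by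
      have h0 : (finSuccAddEquiv m) (Fin.cons (α := fun _ : Fin (m + 1) => G) a v) =
          (Fin.cons (α := fun _ : Fin (m + 1) => G) a v 0, Fin.tail (Fin.cons (α := fun _ : Fin (m + 1) => G) a v)) := rfl
      rw [h0, Fin.cons_zero, Fin.tail_cons]
    exact Finset.mem_image.2 ⟨_, hmem, himg⟩

lemma pi_power_lemma (A S : Finset G) (d : ℚ≥0)
    (h : ∀ Z ⊆ A, d * #Z ≤ (#(Z + S) : ℚ≥0)) (m : ℕ) :
    ∀ X ⊆ Fintype.piFinset (fun _ : Fin m => A),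
      d ^ m * #X ≤ (#(X + Fintype.piFinset fun _ : Fin m => S) : ℚ≥0) := by
  induction m with
  | zero =>
    intro X hX
    have hP : (Fintype.piFinset fun _ : Fin 0 => S) = {0} := by
      ext f
      simp only [Fintype.mem_piFinset, Finset.mem_singleton]
      constructor
      · intro _
        exact funext fun i => i.elim0
      · intro _ i
        exact i.elim0
    rw [hP, Finset.singleton_zero, add_zero, pow_zero, one_mul]
  | succ m ih =>
    intro X hX
    set E := (finSuccAddEquiv m : (Fin (m + 1) → G) ≃+ G × (Fin m → G)) with hE
    have hXsub : X.image E ⊆ A ×ˢ Fintype.piFinset fun _ : Fin m => A := by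
      rw [← image_finSuccAddEquiv_piFinset m A]
      exact Finset.image_subset_image hX
    have hmain := fiber_product_lemma A S (Fintype.piFinset fun _ : Fin m => A)
      (Fintype.piFinset fun _ : Fin m => S) d (d ^ m) h (fun Z hZ => ih Z hZ)
      (X.image E) hXsub
    rw [← image_finSuccAddEquiv_piFinset m S, ← Finset.image_add] at hmain
    rw [Finset.card_image_of_injective _ (EquivLike.injective E),
      Finset.card_image_of_injective _ (EquivLike.injective E)] at hmain
    calc d ^ (m + 1) * (#X : ℚ≥0) = d * d ^ m * #X := by rw [pow_succ]; ring
      _ ≤ _ := hmain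

theorem core_ineq (A B₁ B₂ : Finset G) (hA : A.Nonempty) (hB₁ : B₁.Nonempty)
    (hB₂ : B₂.Nonempty) :
    ∃ X, X ⊆ A ∧ X.Nonempty ∧
      #(X + (B₁ + B₂)) * (#A * #A) ≤ #(A + B₁) * #(A + B₂) * #X := by
  classical
  set S := B₁ + B₂ with hSdef
  have hA' : A ∈ A.powerset.erase ∅ := mem_erase_of_ne_of_mem hA.ne_empty (mem_powerset_self _)
  obtain ⟨X, hX, hmin⟩ := exists_min_image (A.powerset.erase ∅)
    (fun Z => (#(Z + S) : ℚ≥0) / #Z) ⟨A, hA'⟩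
  rw [mem_erase, mem_powerset, ← nonempty_iff_ne_empty] at hX
  obtain ⟨hXne, hXA⟩ := hX
  have hX0 : (0 : ℚ≥0) < #X := by exact_mod_cast hXne.card_pos
  set d : ℚ≥0 := (#(X + S) : ℚ≥0) / #X with hd
  have hdZ : ∀ Z ⊆ A, d * #Z ≤ (#(Z + S) : ℚ≥0) := by
    intro Z hZ
    obtain rfl | hZne := Z.eq_empty_or_nonempty
    · simp
    have hZ0 : (0 : ℚ≥0) < #Z := by exact_mod_cast hZne.card_pos
    exact (le_div_iff₀ hZ0).1 (hmin Z (mem_erase_of_ne_of_mem hZne.ne_empty (mem_powerset.2 hZ)))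
  have hdX : (#(X + S) : ℚ≥0) = d * #X := by
    rw [hd, div_mul_cancel₀]
    exact hX0.ne'
  set u : ℚ≥0 := d * #A * #A with hu
  set w : ℚ≥0 := (#(A + B₁) : ℚ≥0) * #(A + B₂) with hw
  -- the amplification inequality
  have hamp : ∀ r : ℕ, u ^ r * u ^ r ≤ 4 * (w ^ r * w ^ r) := by
    intro r
    set PA := Fintype.piFinset fun _ : Fin r => A with hPA
    set PS := Fintype.piFinset fun _ : Fin r => S with hPS
    set PB₁ := Fintype.piFinset fun _ : Fin r => B₁ with hPB₁
    set PB₂ := Fintype.piFinset fun _ : Fin r => B₂ with hPB₂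
    set 𝒜 := PA ×ˢ PA with h𝒜
    set ℬ := (PB₁ ×ˢ PB₂) ∪ (PB₂ ×ˢ PB₁) with hℬ
    obtain ⟨a, ha⟩ := hA
    have hPAne : PA.Nonempty := ⟨fun _ => a, Fintype.mem_piFinset.2 fun _ => ha⟩
    have h𝒜ne : 𝒜.Nonempty := hPAne.product hPAne
    obtain ⟨𝒳, h𝒳𝒜, h𝒳ne, hP⟩ := petridis_family 𝒜 ℬ h𝒜ne
    have h𝒳0 : (0 : ℚ≥0) < #𝒳 := by exact_mod_cast h𝒳ne.card_pos
    have i1 := hP ℬ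
    have i2 := hP 0
    rw [add_zero, add_zero] at i2
    have hlow : d ^ r * d ^ r * #𝒳 ≤ (#(𝒳 + PS ×ˢ PS) : ℚ≥0) :=
      fiber_product_lemma PA PS PA PS (d ^ r) (d ^ r)
        (pi_power_lemma A S d hdZ r) (pi_power_lemma A S d hdZ r) 𝒳 h𝒳𝒜
    have e12 : PB₁ + PB₂ = PS := by
      rw [hPB₁, hPB₂, ← Fintype.piFinset_add]
    have e21 : PB₂ + PB₁ = PS := by
      rw [hPB₂, hPB₁, ← Fintype.piFinset_add, hPS]
      exact congrArg Fintype.piFinset (funext fun _ => add_comm B₂ B₁)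
    have hBB' : (PB₁ ×ˢ PB₂) + (PB₂ ×ˢ PB₁) = PS ×ˢ PS := by
      rw [prod_add_prod', e12, e21]
    have hsub : 𝒳 + PS ×ˢ PS ⊆ 𝒳 + ℬ + ℬ := by
      rw [← hBB', ← add_assoc]
      exact Finset.add_subset_add
        (Finset.add_subset_add_left Finset.subset_union_left) Finset.subset_union_right
    have hcard𝒜 : (#𝒜 : ℚ≥0) = (#A : ℚ≥0) ^ r * (#A : ℚ≥0) ^ r := by
      rw [h𝒜, Finset.card_product, hPA, Fintype.card_piFinset_const]
      push_cast
      ring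
    have hcardAB : (#(𝒜 + ℬ) : ℚ≥0) ≤ 2 * (w ^ r) := by
      have h1 : 𝒜 + ℬ = (𝒜 + PB₁ ×ˢ PB₂) ∪ (𝒜 + PB₂ ×ˢ PB₁) := Finset.add_union
      have h2 : 𝒜 + PB₁ ×ˢ PB₂ = (PA + PB₁) ×ˢ (PA + PB₂) := prod_add_prod' _ _ _ _
      have h3 : 𝒜 + PB₂ ×ˢ PB₁ = (PA + PB₂) ×ˢ (PA + PB₁) := prod_add_prod' _ _ _ _
      have e1 : PA + PB₁ = Fintype.piFinset fun _ : Fin r => (A + B₁) := by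
        rw [hPA, hPB₁, ← Fintype.piFinset_add]
      have e2 : PA + PB₂ = Fintype.piFinset fun _ : Fin r => (A + B₂) := by
        rw [hPA, hPB₂, ← Fintype.piFinset_add]
      have hc2 : #(𝒜 + PB₁ ×ˢ PB₂) = #(A + B₁) ^ r * #(A + B₂) ^ r := by
        rw [h2, Finset.card_product, e1, e2, Fintype.card_piFinset_const,
          Fintype.card_piFinset_const]
      have hc3 : #(𝒜 + PB₂ ×ˢ PB₁) = #(A + B₁) ^ r * #(A + B₂) ^ r := by
        rw [h3, Finset.card_product, e1, e2, Fintype.card_piFinset_const,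
          Fintype.card_piFinset_const, mul_comm]
      calc (#(𝒜 + ℬ) : ℚ≥0)
          ≤ (#(𝒜 + PB₁ ×ˢ PB₂) : ℚ≥0) + #(𝒜 + PB₂ ×ˢ PB₁) := by
            rw [hℬ, h1]
            exact_mod_cast Finset.card_union_le _ _
        _ = 2 * (w ^ r) := by
            rw [hc2, hc3, hw]
            push_cast
            ring
    -- main chain
    have chain : (d ^ r * d ^ r * (#𝒜 * #𝒜)) * #𝒳 ≤ ((2 * w ^ r) * (2 * w ^ r)) * #𝒳 := by
      calc (d ^ r * d ^ r * ((#𝒜 : ℚ≥0) * #𝒜)) * #𝒳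
          = (d ^ r * d ^ r * #𝒳) * #𝒜 * #𝒜 := by ring
        _ ≤ (#(𝒳 + PS ×ˢ PS) : ℚ≥0) * #𝒜 * #𝒜 := by
            exact mul_le_mul_left (mul_le_mul_left hlow _) _
        _ ≤ (#(𝒳 + ℬ + ℬ) : ℚ≥0) * #𝒜 * #𝒜 := by
            have := Finset.card_le_card hsub
            exact mul_le_mul_left (mul_le_mul_left (by exact_mod_cast this) _) _
        _ = ((#(𝒳 + ℬ + ℬ) : ℚ≥0) * #𝒜) * #𝒜 := by ring
        _ ≤ ((#(𝒜 + ℬ) : ℚ≥0) * #(𝒳 + ℬ)) * #𝒜 := mul_le_mul_left i1 _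
        _ = ((#(𝒳 + ℬ) : ℚ≥0) * #𝒜) * #(𝒜 + ℬ) := by ring
        _ ≤ ((#(𝒜 + ℬ) : ℚ≥0) * #𝒳) * #(𝒜 + ℬ) := mul_le_mul_left i2 _
        _ = ((#(𝒜 + ℬ) : ℚ≥0) * #(𝒜 + ℬ)) * #𝒳 := by ring
        _ ≤ ((2 * w ^ r) * (2 * w ^ r)) * #𝒳 :=
            mul_le_mul_left (mul_le_mul' hcardAB hcardAB) _
    have key : d ^ r * d ^ r * ((#𝒜 : ℚ≥0) * #𝒜) ≤ (2 * w ^ r) * (2 * w ^ r) :=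
      le_of_mul_le_mul_right chain h𝒳0
    calc u ^ r * u ^ r = d ^ r * d ^ r * (((#A : ℚ≥0) ^ r * (#A : ℚ≥0) ^ r) *
          ((#A : ℚ≥0) ^ r * (#A : ℚ≥0) ^ r)) := by rw [hu]; ring
      _ = d ^ r * d ^ r * ((#𝒜 : ℚ≥0) * #𝒜) := by rw [hcard𝒜]
      _ ≤ (2 * w ^ r) * (2 * w ^ r) := key
      _ = 4 * (w ^ r * w ^ r) := by ring
  -- conclude u ≤ w
  have hw0 : (0 : ℚ≥0) < w := by
    have p1 : (0:ℚ≥0) < #(A + B₁) := by exact_mod_cast (hA.add hB₁).card_pos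
    have p2 : (0:ℚ≥0) < #(A + B₂) := by exact_mod_cast (hA.add hB₂).card_pos
    rw [hw]; exact mul_pos p1 p2
  have huw : u ≤ w := by
    by_contra hlt
    push_neg at hlt
    set q : ℚ≥0 := u / w with hq
    have hq1 : 1 < q := by
      rw [hq, lt_div_iff₀ hw0, one_mul]
      exact hlt
    obtain ⟨N, hN⟩ := pow_unbounded_of_one_lt (4 : ℚ≥0) hq1
    have huq : u = q * w := by
      rw [hq, div_mul_cancel₀]
      exact hw0.ne'
    have h1 : u ^ N * u ^ N = q ^ N * q ^ N * (w ^ N * w ^ N) := by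
      rw [huq]; ring
    have hqN1 : 1 ≤ q ^ N := one_le_pow₀ hq1.le
    have hwN0 : (0 : ℚ≥0) < w ^ N * w ^ N := mul_pos (pow_pos hw0 N) (pow_pos hw0 N)
    have h2 : 4 * (w ^ N * w ^ N) < q ^ N * q ^ N * (w ^ N * w ^ N) := by
      have : (4 : ℚ≥0) < q ^ N * q ^ N := by
        calc (4 : ℚ≥0) < q ^ N := hN
          _ = 1 * q ^ N := (one_mul _).symm
          _ ≤ q ^ N * q ^ N := mul_le_mul_left hqN1 _
      exact mul_lt_mul_of_pos_right this hwN0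
    have := hamp N
    rw [h1] at this
    exact absurd this (not_le.2 h2)
  refine ⟨X, hXA, hXne, ?_⟩
  have final : (#(X + S) : ℚ≥0) * (#A * #A) ≤ (#(A + B₁) : ℚ≥0) * #(A + B₂) * #X := by
    calc (#(X + S) : ℚ≥0) * (#A * #A) = (d * #A * #A) * #X := by rw [hdX]; ring
      _ = u * #X := by rw [hu]
      _ ≤ w * #X := mul_le_mul_left huw _
      _ = (#(A + B₁) : ℚ≥0) * #(A + B₂) * #X := by rw [hw]
  exact_mod_cast final

end PluenneckeAux

open Pointwise

/-- **Lemma 2** (Plünnecke–Ruzsa type inequality). Let `A, B₁, B₂` be finite nonempty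
sets in a commutative group with `|A| = n`, `|A+B₁| = K₁n`, `|A+B₂| = K₂n`. Then
there is a nonempty `A' ⊆ A` such that `|A' + B₁ + B₂| ≤ K₁K₂|A'|`. -/
theorem pluennecke_type_inequality {G : Type*} [AddCommGroup G] [DecidableEq G]
    (A B₁ B₂ : Finset G) (hA : A.Nonempty) (hB₁ : B₁.Nonempty) (hB₂ : B₂.Nonempty)
    (n : ℕ) (K₁ K₂ : ℝ) (hn : A.card = n)
    (h₁ : ((A + B₁).card : ℝ) = K₁ * n) (h₂ : ((A + B₂).card : ℝ) = K₂ * n) :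
    ∃ A' : Finset G, A' ⊆ A ∧ A'.Nonempty ∧
      ((A' + B₁ + B₂).card : ℝ) ≤ K₁ * K₂ * A'.card := by
  obtain ⟨X, hXA, hXne, hX⟩ := PluenneckeAux.core_ineq A B₁ B₂ hA hB₁ hB₂
  refine ⟨X, hXA, hXne, ?_⟩
  have hn0 : (0 : ℝ) < n := by
    have := hA.card_pos
    rw [hn] at this
    exact_mod_cast this
  have hmain : ((X + B₁ + B₂).card : ℝ) * (n * n) ≤ K₁ * K₂ * X.card * (n * n) := by
    calc ((X + B₁ + B₂).card : ℝ) * (n * n)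
        = ((X + (B₁ + B₂)).card : ℝ) * ((A.card : ℝ) * A.card) := by
          rw [add_assoc, hn]
      _ ≤ ((A + B₁).card : ℝ) * ((A + B₂).card : ℝ) * X.card := by exact_mod_cast hX
      _ = (K₁ * n) * (K₂ * n) * X.card := by rw [h₁, h₂]
      _ = K₁ * K₂ * X.card * (n * n) := by ring
  have hnn : (0 : ℝ) < n * n := by positivity
  exact le_of_mul_le_mul_right hmain hnn
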